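/- arXiv:1511.05912 — 2 statements merged into one kernel-verified Lean document; each statement's English description precedes it below -/
import Mathlib

section
/- (Criterion for G-convergence of positive definite self-adjoint operators) Let λ > 0, let A_h be a sequence in P_λ(Y), and let P_h be the orthogonal projection of Y onto the closure of the domain of A_h. If for every u ∈ Y the sequence A_h^{-1}P_h u converges in Y, then there exists an operator A ∈ P_λ(Y) such that A_h G-converges to A in Y. -/
open Filter Topology
open scoped InnerProductSpace RealInnerProductSpace ENNReal

noncomputable section

variable (Y : Type*) [NormedAddCommGroup Y] [InnerProductSpace ℝ Y] [CompleteSpace Y]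

/-- The class `P_lam(Y)`: self-adjoint operators `A` defined on a linear
subspace of `Y`, regarded as operators on the closed subspace
`V = closure(D(A))`, satisfying `⟨Au, u⟩ ≥ lam ‖u‖²` on `D(A)`.
Self-adjointness of the symmetric semibounded operator is encoded by
surjectivity of `A + μI : D(A) → V` for every `μ > 0`. -/
structure POp (lam : ℝ) where
  dom : Submodule ℝ Y
  op : dom →ₗ[ℝ] Y
  mem_closure : ∀ u : dom, op u ∈ dom.topologicalClosure
  symmetric : ∀ u v : dom, ⟪op u, (v : Y)⟫ = ⟪(u : Y), op v⟫
  coercive : ∀ u : dom, lam * ‖(u : Y)‖ ^ 2 ≤ ⟪op u, (u : Y)⟫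
  selfadj : ∀ μ : ℝ, 0 < μ → ∀ v ∈ dom.topologicalClosure,
    ∃ u : dom, op u + μ • (u : Y) = v

variable {Y}

/-- The orthogonal projection of `Y` onto the closure of a subspace. -/
def projClosure (K : Submodule ℝ Y) (u : Y) : Y :=
  haveI : CompleteSpace K.topologicalClosure :=
    K.isClosed_topologicalClosure.completeSpace_coe
  (K.topologicalClosure.orthogonalProjection u : Y)

/-- `x` solves `(A + μ I) x = P u`, where `P` is the orthogonal projection onto
the closure of the domain of `A`. -/
def SolvesShifted {lam : ℝ} (A : POp Y lam) (μ : ℝ) (x : Y) (u : Y) : Prop :=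
  ∃ hx : x ∈ A.dom, A.op ⟨x, hx⟩ + μ • x = projClosure A.dom u

/-- G-convergence of `(A_h + μI)` to `(A + μI)`: for every `u ∈ Y`,
`(A_h + μ)⁻¹ P_h u → (A + μ)⁻¹ P u` in `Y` (the inverses applied to the
projections, expressed through the — unique — solutions of the corresponding
equations). With `μ = 0` this is the G-convergence `A_h → A` of Definition 4,
and quantifying over all `μ > 0` gives strong resolvent convergence. -/
def GConvShift {lam : ℝ} (μ : ℝ) (A : ℕ → POp Y lam) (B : POp Y lam) : Prop :=
  ∀ u : Y, ∀ x : ℕ → Y, ∀ y : Y,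
    (∀ h, SolvesShifted (A h) μ (x h) u) → SolvesShifted B μ y u →
      Tendsto x atTop (𝓝 y)

/-- G-convergence `A_h → A` in `P_lam(Y)`, `lam > 0`. -/
def GConvOp {lam : ℝ} (A : ℕ → POp Y lam) (B : POp Y lam) : Prop :=
  GConvShift 0 A B

/-- Convergence in the strong resolvent sense for operators of class `P₀(Y)`. -/
def SRSConv (A : ℕ → POp Y 0) (B : POp Y 0) : Prop :=
  ∀ μ : ℝ, 0 < μ → GConvShift μ A B


section Helpers
variable {Y : Type*} [NormedAddCommGroup Y] [InnerProductSpace ℝ Y] [CompleteSpace Y]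

lemma projClosure_mem (K : Submodule ℝ Y) (u : Y) :
    projClosure K u ∈ K.topologicalClosure := by
  haveI : CompleteSpace K.topologicalClosure :=
    K.isClosed_topologicalClosure.completeSpace_coe
  exact (K.topologicalClosure.orthogonalProjection u).2

lemma inner_projClosure (K : Submodule ℝ Y) (u z : Y) (hz : z ∈ K.topologicalClosure) :
    ⟪projClosure K u, z⟫ = ⟪u, z⟫ := by
  haveI : CompleteSpace K.topologicalClosure :=
    K.isClosed_topologicalClosure.completeSpace_coe
  have h : u - projClosure K u ∈ K.topologicalClosureᗮ :=
    K.topologicalClosure.sub_starProjection_mem_orthogonal u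
  have h2 := (Submodule.mem_orthogonal _ _).mp h z hz
  rw [real_inner_comm] at h2
  rw [inner_sub_left] at h2
  have : ⟪u, z⟫ - ⟪projClosure K u, z⟫ = 0 := h2
  linarith

lemma projClosure_add (K : Submodule ℝ Y) (u v : Y) :
    projClosure K (u + v) = projClosure K u + projClosure K v := by
  haveI : CompleteSpace K.topologicalClosure :=
    K.isClosed_topologicalClosure.completeSpace_coe
  simp only [projClosure, map_add, Submodule.coe_add]

lemma projClosure_smul (K : Submodule ℝ Y) (c : ℝ) (u : Y) :
    projClosure K (c • u) = c • projClosure K u := by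
  haveI : CompleteSpace K.topologicalClosure :=
    K.isClosed_topologicalClosure.completeSpace_coe
  simp only [projClosure, map_smul, Submodule.coe_smul]

lemma projClosure_eq_self (K : Submodule ℝ Y) {u : Y} (hu : u ∈ K.topologicalClosure) :
    projClosure K u = u := by
  haveI : CompleteSpace K.topologicalClosure :=
    K.isClosed_topologicalClosure.completeSpace_coe
  have := Submodule.orthogonalProjection_mem_subspace_eq_self (K := K.topologicalClosure) ⟨u, hu⟩
  simpa [projClosure] using congrArg (Subtype.val) this

lemma mem_orthogonal_closure {K : Submodule ℝ Y} {w : Y} (h : ∀ z ∈ K, ⟪w, z⟫ = 0) :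
    w ∈ K.topologicalClosureᗮ := by
  rw [Submodule.mem_orthogonal]
  have hle : K.topologicalClosure ≤ LinearMap.ker ((innerSL ℝ w : Y →L[ℝ] ℝ) : Y →ₗ[ℝ] ℝ) :=
    K.topologicalClosure_minimal
      (fun z hz => by simpa using h z hz)
      (ContinuousLinearMap.isClosed_ker _)
  intro z hz
  have := hle hz
  rw [LinearMap.mem_ker] at this
  simpa [real_inner_comm] using this

end Helpers

section Solutions
set_option linter.unusedSectionVars false
variable {Y : Type*} [NormedAddCommGroup Y] [InnerProductSpace ℝ Y] [CompleteSpace Y]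

lemma solves_op_eq {lam : ℝ} {A : POp Y lam} {x u : Y} (h : SolvesShifted A 0 x u) :
    ∃ hx : x ∈ A.dom, A.op ⟨x, hx⟩ = projClosure A.dom u := by
  obtain ⟨hx, he⟩ := h
  exact ⟨hx, by simpa using he⟩

lemma solves_unique {lam : ℝ} (hlam : 0 < lam) {A : POp Y lam} {x x' u : Y}
    (h : SolvesShifted A 0 x u) (h' : SolvesShifted A 0 x' u) : x = x' := by
  obtain ⟨hx, he⟩ := solves_op_eq h
  obtain ⟨hx', he'⟩ := solves_op_eq h'
  have hd : A.op (⟨x, hx⟩ - ⟨x', hx'⟩) = 0 := by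
    rw [map_sub, he, he', sub_self]
  have hc := A.coercive (⟨x, hx⟩ - ⟨x', hx'⟩)
  rw [hd] at hc
  simp only [inner_zero_left] at hc
  have hcoe : ((⟨x, hx⟩ - ⟨x', hx'⟩ : A.dom) : Y) = x - x' := rfl
  rw [hcoe] at hc
  have h2 : ‖x - x'‖ ^ 2 = 0 := le_antisymm (by nlinarith) (sq_nonneg _)
  exact sub_eq_zero.mp (norm_eq_zero.mp (sq_eq_zero_iff.mp h2))

lemma solves_inner_eq {lam : ℝ} {A : POp Y lam} {x u : Y} (h : SolvesShifted A 0 x u) :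
    ⟪projClosure A.dom u, x⟫ = ⟪u, x⟫ :=
  inner_projClosure _ _ _ (A.dom.le_topologicalClosure h.1)

lemma aux_cancel {lam a b : ℝ} (hlam : 0 < lam) (h : lam * a ^ 2 ≤ b * a)
    (ha : 0 ≤ a) (hb : 0 ≤ b) : a ≤ b / lam := by
  rw [le_div_iff₀ hlam]
  rcases eq_or_lt_of_le ha with h0 | h0
  · rw [← h0]; simpa using hb
  · nlinarith

lemma solves_norm_le {lam : ℝ} (hlam : 0 < lam) {A : POp Y lam} {x u : Y}
    (h : SolvesShifted A 0 x u) : ‖x‖ ≤ ‖u‖ / lam := by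
  obtain ⟨hx, he⟩ := solves_op_eq h
  have hc := A.coercive ⟨x, hx⟩
  rw [he] at hc
  have h1 : ⟪projClosure A.dom u, x⟫ = ⟪u, x⟫ := solves_inner_eq h
  have h2 : ⟪u, x⟫ ≤ ‖u‖ * ‖x‖ := real_inner_le_norm u x
  exact aux_cancel hlam (by nlinarith) (norm_nonneg _) (norm_nonneg _)

lemma solves_inner_symm {lam : ℝ} {A : POp Y lam} {x x' u u' : Y}
    (h : SolvesShifted A 0 x u) (h' : SolvesShifted A 0 x' u') :
    ⟪x, u'⟫ = ⟪u, x'⟫ := by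
  obtain ⟨hx, he⟩ := solves_op_eq h
  obtain ⟨hx', he'⟩ := solves_op_eq h'
  calc ⟪x, u'⟫ = ⟪u', x⟫ := real_inner_comm _ _
    _ = ⟪projClosure A.dom u', x⟫ :=
        (inner_projClosure _ _ _ (A.dom.le_topologicalClosure hx)).symm
    _ = ⟪A.op ⟨x', hx'⟩, x⟫ := by rw [he']
    _ = ⟪(x' : Y), A.op ⟨x, hx⟩⟫ := A.symmetric ⟨x', hx'⟩ ⟨x, hx⟩
    _ = ⟪A.op ⟨x, hx⟩, x'⟫ := real_inner_comm _ _
    _ = ⟪projClosure A.dom u, x'⟫ := by rw [he]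
    _ = ⟪u, x'⟫ := inner_projClosure _ _ _ (A.dom.le_topologicalClosure hx')

lemma solves_coercive {lam : ℝ} {A : POp Y lam} {x u : Y} (h : SolvesShifted A 0 x u) :
    lam * ‖x‖ ^ 2 ≤ ⟪x, u⟫ := by
  obtain ⟨hx, he⟩ := solves_op_eq h
  have hc := A.coercive ⟨x, hx⟩
  rw [he] at hc
  calc lam * ‖x‖ ^ 2 ≤ ⟪projClosure A.dom u, x⟫ := hc
    _ = ⟪u, x⟫ := solves_inner_eq h
    _ = ⟪x, u⟫ := real_inner_comm _ _

lemma solves_add {lam : ℝ} {A : POp Y lam} {x x' u u' : Y}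
    (h : SolvesShifted A 0 x u) (h' : SolvesShifted A 0 x' u') :
    SolvesShifted A 0 (x + x') (u + u') := by
  obtain ⟨hx, he⟩ := solves_op_eq h
  obtain ⟨hx', he'⟩ := solves_op_eq h'
  refine ⟨A.dom.add_mem hx hx', ?_⟩
  have : (⟨x + x', A.dom.add_mem hx hx'⟩ : A.dom) = ⟨x, hx⟩ + ⟨x', hx'⟩ := rfl
  rw [this, map_add, he, he', projClosure_add]
  simp

lemma solves_smul {lam : ℝ} {A : POp Y lam} (c : ℝ) {x u : Y}
    (h : SolvesShifted A 0 x u) : SolvesShifted A 0 (c • x) (c • u) := by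
  obtain ⟨hx, he⟩ := solves_op_eq h
  refine ⟨A.dom.smul_mem c hx, ?_⟩
  have : (⟨c • x, A.dom.smul_mem c hx⟩ : A.dom) = c • ⟨x, hx⟩ := rfl
  rw [this, map_smul, he, projClosure_smul]
  simp

lemma solves_exists {lam : ℝ} (hlam : 0 < lam) (A : POp Y lam) (u : Y) :
    ∃ x, SolvesShifted A 0 x u := by
  set v := projClosure A.dom u with hv
  have hvmem : v ∈ A.dom.topologicalClosure := projClosure_mem _ _
  set μ : ℕ → ℝ := fun n => 1 / (n + 1) with hμ
  have hμpos : ∀ n, 0 < μ n := fun n => by positivity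
  have hμto : Filter.Tendsto μ Filter.atTop (nhds 0) := tendsto_one_div_add_atTop_nhds_zero_nat
  have hsel : ∀ n : ℕ, ∃ w : A.dom, A.op w + μ n • (w : Y) = v :=
    fun n => A.selfadj (μ n) (hμpos n) v hvmem
  choose w hw using hsel
  have hop : ∀ n, A.op (w n) = v - μ n • (w n : Y) := fun n => eq_sub_of_add_eq (hw n)
  -- norm bound
  have hbnd : ∀ n, ‖(w n : Y)‖ ≤ ‖v‖ / lam := by
    intro n
    refine aux_cancel hlam ?_ (norm_nonneg _) (norm_nonneg _)
    have hc := A.coercive (w n)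
    rw [hop n, inner_sub_left, real_inner_smul_left, real_inner_self_eq_norm_sq] at hc
    have h2 : ⟪v, (w n : Y)⟫ ≤ ‖v‖ * ‖(w n : Y)‖ := real_inner_le_norm _ _
    nlinarith [sq_nonneg ‖(w n : Y)‖, (hμpos n).le]
  -- Cauchy
  have hcauchy : CauchySeq (fun n => (w n : Y)) := by
    apply cauchySeq_of_le_tendsto_0 (fun N => (2 * μ N) * (‖v‖ / lam) / lam)
    · intro n m N hn hm
      rw [dist_eq_norm]
      set d : A.dom := w n - w m with hd
      have hdc : (d : Y) = (w n : Y) - (w m : Y) := rfl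
      have hopd : A.op d = μ m • (w m : Y) - μ n • (w n : Y) := by
        rw [hd, map_sub, hop n, hop m]; abel
      have hc := A.coercive d
      rw [hopd] at hc
      have hub : ⟪μ m • (w m : Y) - μ n • (w n : Y), (d : Y)⟫
          ≤ ((2 * μ N) * (‖v‖ / lam)) * ‖(d : Y)‖ := by
        refine le_trans (real_inner_le_norm _ _) ?_
        gcongr
        have h1 : ‖μ m • (w m : Y) - μ n • (w n : Y)‖
            ≤ μ m * ‖(w m : Y)‖ + μ n * ‖(w n : Y)‖ := by
          refine le_trans (norm_sub_le _ _) (le_of_eq ?_)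
          rw [norm_smul, norm_smul, Real.norm_eq_abs, Real.norm_eq_abs,
            abs_of_pos (hμpos m), abs_of_pos (hμpos n)]
        have hmono : ∀ {a b : ℕ}, a ≤ b → μ b ≤ μ a := by
          intro a b hab
          apply one_div_le_one_div_of_le (by positivity)
          exact_mod_cast by exact_mod_cast add_le_add_left (Nat.cast_le.mpr hab) 1
        calc ‖μ m • (w m : Y) - μ n • (w n : Y)‖
            ≤ μ m * ‖(w m : Y)‖ + μ n * ‖(w n : Y)‖ := h1
          _ ≤ μ N * (‖v‖ / lam) + μ N * (‖v‖ / lam) := by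
              have hvl : (0:ℝ) ≤ ‖v‖ / lam := by positivity
              gcongr
              exacts [hmono hm, hbnd m, hmono hn, hbnd n]
          _ = (2 * μ N) * (‖v‖ / lam) := by ring
      have := aux_cancel hlam (by nlinarith) (norm_nonneg (d : Y))
        (by positivity : (0:ℝ) ≤ (2 * μ N) * (‖v‖ / lam))
      rw [hdc] at this
      exact this
    · have : Filter.Tendsto (fun N => (2 * μ N) * (‖v‖ / lam) / lam)
          Filter.atTop (nhds ((2 * 0) * (‖v‖ / lam) / lam)) := by
        exact (((hμto.const_mul 2).mul_const (‖v‖ / lam)).div_const lam)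
      simpa using this
  obtain ⟨x, hx⟩ := cauchySeq_tendsto_of_complete hcauchy
  -- x ∈ closure of dom
  have hxcl : x ∈ A.dom.topologicalClosure := by
    have hcl : IsClosed (A.dom.topologicalClosure : Set Y) := A.dom.isClosed_topologicalClosure
    exact hcl.mem_of_tendsto hx (Filter.Eventually.of_forall fun n =>
      A.dom.le_topologicalClosure (w n).2)
  -- get z with A z + z = v + x
  obtain ⟨z, hz⟩ := A.selfadj 1 one_pos (v + x)
    (A.dom.topologicalClosure.add_mem hvmem hxcl)
  -- error terms
  have herr : Filter.Tendsto (fun n => A.op (w n - z) + ((w n - z : A.dom) : Y))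
      Filter.atTop (nhds 0) := by
    have heq : ∀ n, A.op (w n - z) + ((w n - z : A.dom) : Y)
        = (1 - μ n) • (w n : Y) - x := by
      intro n
      have h1 : A.op (w n - z) = A.op (w n) - A.op z := map_sub _ _ _
      have h2 : ((w n - z : A.dom) : Y) = (w n : Y) - (z : Y) := rfl
      have h3 : A.op z = v + x - (z : Y) := by
        have hz1 := hz; rw [one_smul] at hz1; exact eq_sub_of_add_eq hz1
      rw [h1, h2, hop n, h3, sub_smul, one_smul]
      abel
    rw [show (0:Y) = (1:ℝ) • x - x by simp]
    refine Filter.Tendsto.congr (fun n => (heq n).symm) ?_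
    exact Filter.Tendsto.sub (Filter.Tendsto.smul (by simpa using (tendsto_const_nhds.sub hμto)) hx)
      tendsto_const_nhds
  -- w n → z
  have hwz : Filter.Tendsto (fun n => (w n : Y)) Filter.atTop (nhds (z : Y)) := by
    have hkey : ∀ n, ‖(w n : Y) - (z : Y)‖
        ≤ ‖A.op (w n - z) + ((w n - z : A.dom) : Y)‖ / (lam + 1) := by
      intro n
      set d : A.dom := w n - z with hd
      have hc := A.coercive d
      have hlow : (lam + 1) * ‖(d : Y)‖ ^ 2 ≤ ⟪A.op d + (d : Y), (d : Y)⟫ := by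
        rw [inner_add_left, real_inner_self_eq_norm_sq]
        nlinarith
      have hup : ⟪A.op d + (d : Y), (d : Y)⟫ ≤ ‖A.op d + (d : Y)‖ * ‖(d : Y)‖ :=
        real_inner_le_norm _ _
      have := aux_cancel (by linarith : (0:ℝ) < lam + 1)
        (le_trans hlow hup) (norm_nonneg _) (norm_nonneg _)
      exact this
    rw [← tendsto_sub_nhds_zero_iff]
    apply squeeze_zero_norm hkey
    have : Filter.Tendsto (fun n => ‖A.op (w n - z) + ((w n - z : A.dom) : Y)‖ / (lam + 1))
        Filter.atTop (nhds (‖(0:Y)‖ / (lam + 1))) :=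
      (herr.norm).div_const _
    simpa using this
  have hxz : x = (z : Y) := tendsto_nhds_unique hx hwz
  -- conclude
  refine ⟨(z : Y), z.2, ?_⟩
  have hAz : A.op z = v := by
    have hz1 := hz
    rw [one_smul, hxz] at hz1
    have : A.op z + (z : Y) = v + (z : Y) := hz1
    exact add_right_cancel this
  have hz' : (⟨(z:Y), z.2⟩ : A.dom) = z := rfl
  rw [hz']
  simpa using hAz


end Solutions

section Build
set_option linter.unusedSectionVars false
set_option maxHeartbeats 1000000
variable {Y : Type*} [NormedAddCommGroup Y] [InnerProductSpace ℝ Y] [CompleteSpace Y]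

lemma projClosure_sub (K : Submodule ℝ Y) (u v : Y) :
    projClosure K (u - v) = projClosure K u - projClosure K v := by
  haveI : CompleteSpace K.topologicalClosure :=
    K.isClosed_topologicalClosure.completeSpace_coe
  simp only [projClosure, map_sub, Submodule.coe_sub]

lemma sub_projClosure_mem (K : Submodule ℝ Y) (u : Y) :
    u - projClosure K u ∈ K.topologicalClosureᗮ := by
  haveI : CompleteSpace K.topologicalClosure :=
    K.isClosed_topologicalClosure.completeSpace_coe
  exact K.topologicalClosure.sub_starProjection_mem_orthogonal u

lemma build_POp {lam : ℝ} (hlam : 0 < lam) (T : Y →ₗ[ℝ] Y)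
    (hTsym : ∀ u v : Y, ⟪T u, v⟫ = ⟪u, T v⟫)
    (hTpos : ∀ u : Y, lam * ‖T u‖ ^ 2 ≤ ⟪T u, u⟫)
    (hTnorm : ∀ u : Y, ‖T u‖ ≤ ‖u‖ / lam) :
    ∃ B : POp Y lam, ∀ y u : Y, SolvesShifted B 0 y u → y = T u := by
  classical
  set K := LinearMap.range T with hK
  have hTmem : ∀ u : Y, T u ∈ K := fun u => LinearMap.mem_range_self T u
  haveI : CompleteSpace K.topologicalClosure :=
    K.isClosed_topologicalClosure.completeSpace_coe
  have hTpos0 : ∀ u : Y, (0:ℝ) ≤ ⟪T u, u⟫ := fun u =>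
    le_trans (by positivity) (hTpos u)
  -- orthogonality to the closure of the range kills T
  have hker : ∀ a : Y, a ∈ K.topologicalClosureᗮ → T a = 0 := by
    intro a ha
    have h1 : ⟪T a, a⟫ = 0 :=
      (Submodule.mem_orthogonal _ _).mp ha (T a) (K.le_topologicalClosure (hTmem a))
    have h2 := hTpos a
    rw [h1] at h2
    have h3 : ‖T a‖ ^ 2 = 0 := le_antisymm (by nlinarith) (sq_nonneg _)
    exact norm_eq_zero.mp (sq_eq_zero_iff.mp h3)
  -- well-definedness of the inverse
  have hwd : ∀ a b : Y, T a = T b → projClosure K a = projClosure K b := by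
    intro a b hab
    have hmem : a - b ∈ K.topologicalClosureᗮ := by
      apply mem_orthogonal_closure
      rintro z ⟨c, rfl⟩
      calc ⟪a - b, T c⟫ = ⟪T (a - b), c⟫ := (hTsym (a - b) c).symm
        _ = 0 := by rw [map_sub, hab, sub_self]; exact inner_zero_left c
    have h0 : projClosure K (a - b) = 0 := by
      have := Submodule.orthogonalProjectionOnto_apply_of_mem_orthogonal hmem
      simpa [projClosure] using congrArg Subtype.val this
    have h1 := projClosure_sub K a b
    rw [h0] at h1
    exact (sub_eq_zero.mp h1.symm)
  -- preimage selection
  have hpre : ∀ x : K, ∃ a : Y, T a = (x : Y) := fun x => LinearMap.mem_range.mp x.2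
  set pre : K → Y := fun x => (hpre x).choose with hpredef
  have hpre_spec : ∀ x : K, T (pre x) = (x : Y) := fun x => (hpre x).choose_spec
  set opL : K →ₗ[ℝ] Y :=
    { toFun := fun x => projClosure K (pre x)
      map_add' := by
        intro x y
        have h1 : T (pre (x + y)) = T (pre x + pre y) := by
          rw [map_add, hpre_spec, hpre_spec, hpre_spec]; rfl
        show projClosure K (pre (x + y)) = projClosure K (pre x) + projClosure K (pre y)
        rw [hwd _ _ h1, projClosure_add]
      map_smul' := by
        intro c x
        have h1 : T (pre (c • x)) = T (c • pre x) := by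
          rw [map_smul, hpre_spec, hpre_spec]; rfl
        show projClosure K (pre (c • x)) = (RingHom.id ℝ) c • projClosure K (pre x)
        rw [hwd _ _ h1, projClosure_smul]; rfl } with hopLdef
  have hopL : ∀ (a : Y) (hx : T a ∈ K), opL ⟨T a, hx⟩ = projClosure K a := by
    intro a hx
    exact hwd _ _ (by rw [hpre_spec ⟨T a, hx⟩])
  have hopL' : ∀ x : K, opL x = projClosure K (pre x) := fun _ => rfl
  -- the operator B
  refine ⟨⟨K, opL, ?_, ?_, ?_, ?_⟩, ?_⟩
  · -- mem_closure
    intro u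
    exact projClosure_mem _ _
  · -- symmetric
    intro u v
    have hvcl : (v : Y) ∈ K.topologicalClosure := K.le_topologicalClosure v.2
    have hucl : (u : Y) ∈ K.topologicalClosure := K.le_topologicalClosure u.2
    rw [hopL' u, hopL' v]
    calc ⟪projClosure K (pre u), (v : Y)⟫
        = ⟪pre u, (v : Y)⟫ := inner_projClosure _ _ _ hvcl
      _ = ⟪pre u, T (pre v)⟫ := by rw [hpre_spec v]
      _ = ⟪T (pre u), pre v⟫ := (hTsym _ _).symm
      _ = ⟪(u : Y), pre v⟫ := by rw [hpre_spec u]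
      _ = ⟪pre v, (u : Y)⟫ := real_inner_comm _ _
      _ = ⟪projClosure K (pre v), (u : Y)⟫ := (inner_projClosure _ _ _ hucl).symm
      _ = ⟪(u : Y), projClosure K (pre v)⟫ := real_inner_comm _ _
  · -- coercive
    intro u
    have hucl : (u : Y) ∈ K.topologicalClosure := K.le_topologicalClosure u.2
    rw [hopL' u]
    have h1 : ⟪projClosure K (pre u), (u : Y)⟫ = ⟪T (pre u), pre u⟫ := by
      calc ⟪projClosure K (pre u), (u : Y)⟫
          = ⟪pre u, (u : Y)⟫ := inner_projClosure _ _ _ hucl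
        _ = ⟪pre u, T (pre u)⟫ := by rw [hpre_spec u]
        _ = ⟪T (pre u), pre u⟫ := real_inner_comm _ _
    rw [h1, ← hpre_spec u]
    exact hTpos (pre u)
  · -- selfadj via Lax-Milgram
    intro μ hμ v hv
    set Vc := K.topologicalClosure with hVc
    have hTr_mem : ∀ x : Vc, T (x : Y) ∈ Vc := fun x => K.le_topologicalClosure (hTmem x)
    set TrL : Vc →ₗ[ℝ] Vc :=
      { toFun := fun x => ⟨T (x : Y), hTr_mem x⟩
        map_add' := by intro x y; ext; simp
        map_smul' := by intro c x; ext; simp } with hTrL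
    have hTr_bound : ∀ x : Vc, ‖TrL x‖ ≤ (1 / lam) * ‖x‖ := by
      intro x
      have : ‖T (x : Y)‖ ≤ ‖(x : Y)‖ / lam := hTnorm _
      calc ‖TrL x‖ = ‖T (x : Y)‖ := rfl
        _ ≤ ‖(x : Y)‖ / lam := this
        _ = (1 / lam) * ‖x‖ := by
            rw [show ‖x‖ = ‖(x : Y)‖ from rfl, one_div, div_eq_mul_inv]; ring
    set Tr : Vc →L[ℝ] Vc := TrL.mkContinuous (1 / lam) hTr_bound with hTrdef
    set M : Vc →L[ℝ] Vc := ContinuousLinearMap.id ℝ Vc + μ • Tr with hM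
    have hMapp : ∀ x : Vc, (M x : Y) = (x : Y) + μ • T (x : Y) := by
      intro x
      simp [hM, hTrdef, TrL.mkContinuous_apply, hTrL]
    set Bb : Vc →L[ℝ] Vc →L[ℝ] ℝ := (innerSL ℝ).comp M with hBb
    have hBapp : ∀ x w : Vc, Bb x w = ⟪(M x : Y), (w : Y)⟫ := by
      intro x w
      simp [hBb, Submodule.coe_inner]
    have hcoer : IsCoercive Bb := by
      refine ⟨1, one_pos, fun x => ?_⟩
      rw [hBapp x x, hMapp x, inner_add_left, real_inner_self_eq_norm_sq,
        real_inner_smul_left]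
      have h1 : (0:ℝ) ≤ ⟪T (x : Y), (x : Y)⟫ := hTpos0 _
      have h2 : ‖x‖ = ‖(x : Y)‖ := rfl
      rw [h2]
      nlinarith [mul_nonneg hμ.le h1]
    set E := hcoer.continuousLinearEquivOfBilin with hE
    have hME : ∀ x : Vc, E x = M x := by
      intro x
      apply ext_inner_right ℝ
      intro w
      rw [hcoer.continuousLinearEquivOfBilin_apply, hBapp]
      rfl
    set x : Vc := E.symm ⟨v, hv⟩ with hx
    have hMx : M x = ⟨v, hv⟩ := by rw [← hME, hx, E.apply_symm_apply]
    have hcoord : (x : Y) + μ • T (x : Y) = v := by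
      have := congrArg Subtype.val hMx
      rw [hMapp] at this
      exact this
    refine ⟨⟨T (x : Y), hTmem _⟩, ?_⟩
    rw [hopL]
    have hxcl : projClosure K (x : Y) = (x : Y) := projClosure_eq_self _ x.2
    rw [hxcl]
    exact hcoord
  · -- uniqueness of solutions: y = T u
    intro y u hy
    obtain ⟨hy1, hy2⟩ := hy
    simp only [zero_smul, add_zero] at hy2
    obtain ⟨w, hwT⟩ := LinearMap.mem_range.mp hy1
    have hsub : (⟨y, hy1⟩ : K) = ⟨T w, hTmem w⟩ := Subtype.ext hwT.symm
    rw [hsub, hopL] at hy2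
    -- projClosure K w = projClosure K u
    have hwu : w - u ∈ K.topologicalClosureᗮ := by
      have h1 := sub_projClosure_mem K w
      have h2 := sub_projClosure_mem K u
      have h3 : w - u = (w - projClosure K w) - (u - projClosure K u) := by
        rw [hy2]; abel
      rw [h3]
      exact Submodule.sub_mem _ h1 h2
    have h4 : T (w - u) = 0 := hker _ hwu
    rw [map_sub, sub_eq_zero] at h4
    rw [← hwT, h4]

end Build

/-- **Criterion for G-convergence** (Lemma 1): if `lam > 0`, `A_h ∈ P_lam(Y)`,
and for every `u ∈ Y` the sequence `A_h⁻¹ P_h u` converges in `Y` (where `P_h`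
is the orthogonal projection onto the closure of the domain of `A_h`), then
there exists `A ∈ P_lam(Y)` such that `A_h` G-converges to `A` in `Y`. -/
theorem g_convergence_criterion {Y : Type*} [NormedAddCommGroup Y]
    [InnerProductSpace ℝ Y] [CompleteSpace Y]
    (lam : ℝ) (hlam : 0 < lam) (A : ℕ → POp Y lam)
    (hconv : ∀ u : Y, ∀ x : ℕ → Y,
      (∀ h, SolvesShifted (A h) 0 (x h) u) → ∃ L : Y, Tendsto x atTop (𝓝 L)) :
    ∃ B : POp Y lam, GConvOp A B := by
  classical
  -- canonical solutions
  choose S hS using fun (h : ℕ) (u : Y) => solves_exists hlam (A h) u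
  have hSu : ∀ (u : Y) (x : ℕ → Y),
      (∀ h, SolvesShifted (A h) 0 (x h) u) → x = fun h => S h u := by
    intro u x hx
    funext h
    exact solves_unique hlam (hx h) (hS h u)
  -- the limit map
  choose T0 hT0 using fun u => hconv u (fun h => S h u) (fun h => hS h u)
  have hTadd : ∀ u v : Y, T0 (u + v) = T0 u + T0 v := by
    intro u v
    have h1 : ∀ h, SolvesShifted (A h) 0 (S h u + S h v) (u + v) :=
      fun h => solves_add (hS h u) (hS h v)
    have h2 : (fun h => S h u + S h v) = fun h => S h (u + v) := hSu _ _ h1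
    have h3 : Tendsto (fun h => S h (u + v)) atTop (𝓝 (T0 u + T0 v)) := by
      rw [← h2]
      exact (hT0 u).add (hT0 v)
    exact tendsto_nhds_unique (hT0 (u + v)) h3
  have hTsmul : ∀ (c : ℝ) (u : Y), T0 (c • u) = c • T0 u := by
    intro c u
    have h1 : ∀ h, SolvesShifted (A h) 0 (c • S h u) (c • u) :=
      fun h => solves_smul c (hS h u)
    have h2 : (fun h => c • S h u) = fun h => S h (c • u) := hSu _ _ h1
    have h3 : Tendsto (fun h => S h (c • u)) atTop (𝓝 (c • T0 u)) := by
      rw [← h2]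
      exact (hT0 u).const_smul c
    exact tendsto_nhds_unique (hT0 (c • u)) h3
  set T : Y →ₗ[ℝ] Y :=
    { toFun := T0
      map_add' := hTadd
      map_smul' := hTsmul } with hT
  have hTapp : ∀ u : Y, T u = T0 u := fun _ => rfl
  have hTsym : ∀ u v : Y, ⟪T u, v⟫ = ⟪u, T v⟫ := by
    intro u v
    have h1 : Tendsto (fun h => ⟪S h u, v⟫) atTop (𝓝 ⟪T0 u, v⟫) :=
      (hT0 u).inner tendsto_const_nhds
    have h2 : Tendsto (fun h => ⟪u, S h v⟫) atTop (𝓝 ⟪u, T0 v⟫) :=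
      tendsto_const_nhds.inner (hT0 v)
    have h3 : ∀ h, ⟪S h u, v⟫ = ⟪u, S h v⟫ :=
      fun h => solves_inner_symm (hS h u) (hS h v)
    rw [hTapp, hTapp]
    exact tendsto_nhds_unique (h1.congr h3) h2
  have hTpos : ∀ u : Y, lam * ‖T u‖ ^ 2 ≤ ⟪T u, u⟫ := by
    intro u
    rw [hTapp]
    have h1 : Tendsto (fun h => lam * ‖S h u‖ ^ 2) atTop (𝓝 (lam * ‖T0 u‖ ^ 2)) :=
      (((hT0 u).norm).pow 2).const_mul lam
    have h2 : Tendsto (fun h => ⟪S h u, u⟫) atTop (𝓝 ⟪T0 u, u⟫) :=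
      (hT0 u).inner tendsto_const_nhds
    exact le_of_tendsto_of_tendsto' h1 h2 (fun h => solves_coercive (hS h u))
  have hTnorm : ∀ u : Y, ‖T u‖ ≤ ‖u‖ / lam := by
    intro u
    rw [hTapp]
    exact le_of_tendsto' (hT0 u).norm (fun h => solves_norm_le hlam (hS h u))
  obtain ⟨B, hB⟩ := build_POp hlam T hTsym hTpos hTnorm
  refine ⟨B, ?_⟩
  intro u x y hx hy
  have hxeq : x = fun h => S h u := hSu u x hx
  have hyeq : y = T u := hB y u hy
  rw [hxeq, hyeq, hTapp]
  exact hT0 u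

end
end

section
/- (Γ-limits of equi-bounded convex functions are pointwise limits) Let Y be a normed vector space and let F_h be a sequence of convex functions on Y. Suppose F_h is equi-bounded in a neighborhood of u ∈ Y, i.e., there exist U ∈ N(u) and a constant C such that |F_h(v)| ≤ C for every v ∈ U and all h. Then the Γ-lower limit of F_h at u equals liminf_{h→∞} F_h(u) and the Γ-upper limit of F_h at u equals limsup_{h→∞} F_h(u). -/
open Filter Topology

noncomputable section

/-- The Γ-lower limit `F^i(u) = sup_{U ∈ N(u)} liminf_h inf_{v ∈ U} F_h(v)`
of a sequence of (extended-real-valued, here real-valued) functionals, where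
`N(u)` is the family of open neighborhoods of `u`. -/
def GammaLiminf {Y : Type*} [TopologicalSpace Y] (F : ℕ → Y → ℝ) (u : Y) : EReal :=
  ⨆ U ∈ {U : Set Y | IsOpen U ∧ u ∈ U},
    Filter.liminf (fun h => ⨅ v ∈ U, (F h v : EReal)) Filter.atTop

/-- The Γ-upper limit `F^s(u) = sup_{U ∈ N(u)} limsup_h inf_{v ∈ U} F_h(v)`. -/
def GammaLimsup {Y : Type*} [TopologicalSpace Y] (F : ℕ → Y → ℝ) (u : Y) : EReal :=
  ⨆ U ∈ {U : Set Y | IsOpen U ∧ u ∈ U},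
    Filter.limsup (fun h => ⨅ v ∈ U, (F h v : EReal)) Filter.atTop

/-- **Γ-limits of equi-bounded convex functions are pointwise limits**
(Lemma 4): if `Y` is a normed vector space, `F_h` a sequence of convex
functions on `Y` which is equi-bounded in a neighborhood of `u`, then the
Γ-lower and Γ-upper limits of `F_h` at `u` are `liminf_h F_h(u)` and
`limsup_h F_h(u)` respectively. -/
theorem gamma_limits_of_equibounded_convex
    {Y : Type*} [NormedAddCommGroup Y] [NormedSpace ℝ Y]
    (F : ℕ → Y → ℝ) (hconv : ∀ h, ConvexOn ℝ Set.univ (F h))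
    (u : Y)
    (hequibdd : ∃ U : Set Y, IsOpen U ∧ u ∈ U ∧ ∃ C : ℝ,
      ∀ h, ∀ v ∈ U, |F h v| ≤ C) :
    GammaLiminf F u = Filter.liminf (fun h => (F h u : EReal)) Filter.atTop ∧
    GammaLimsup F u = Filter.limsup (fun h => (F h u : EReal)) Filter.atTop := by
  obtain ⟨U, hUopen, huU, C, hC⟩ := hequibdd
  obtain ⟨r, hr, hrU⟩ := Metric.isOpen_iff.1 hUopen u huU
  -- a uniform Lipschitz constant
  set K : NNReal := (2 * C / (r / 2)).toNNReal with hKdef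
  have hlip : ∀ h, LipschitzOnWith K (F h) (Metric.ball u (r / 2)) := by
    intro h
    have hcb : ConvexOn ℝ (Metric.ball u r) (F h) :=
      (hconv h).subset (Set.subset_univ _) (convex_ball u r)
    have := hcb.lipschitzOnWith_of_abs_le (ε := r / 2) (by linarith)
      (fun a ha => hC h a (hrU (Metric.mem_ball.2 ha)))
    have hr2 : r - r / 2 = r / 2 := by ring
    rwa [hr2] at this
  -- key pointwise lower bound on small balls
  have key : ∀ ε : ℝ, 0 < ε → ε ≤ r / 2 → ∀ h, ∀ v ∈ Metric.ball u ε,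
      F h u - (K : ℝ) * ε ≤ F h v := by
    intro ε hε hεr h v hv
    have hu' : u ∈ Metric.ball u (r / 2) := Metric.mem_ball_self (by linarith)
    have hv' : v ∈ Metric.ball u (r / 2) :=
      Metric.ball_subset_ball hεr hv
    have hd := (hlip h).dist_le_mul u hu' v hv'
    have h1 : F h u - F h v ≤ (K : ℝ) * dist u v :=
      (le_abs_self _).trans (by rwa [Real.dist_eq] at hd)
    have h2 : dist u v < ε := by rwa [dist_comm, ← Metric.mem_ball]
    nlinarith [K.coe_nonneg]
  -- easy direction: each neighborhood inf is ≤ value at u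
  have easy_inf : ∀ V : Set Y, IsOpen V → u ∈ V → ∀ h : ℕ,
      (⨅ v ∈ V, (F h v : EReal)) ≤ (F h u : EReal) := by
    intro V _ huV h
    exact iInf₂_le u huV
  -- lower bound on the inf over small balls
  have ball_inf : ∀ ε : ℝ, 0 < ε → ε ≤ r / 2 → ∀ h : ℕ,
      ((F h u - (K : ℝ) * ε : ℝ) : EReal) ≤ ⨅ v ∈ Metric.ball u ε, (F h v : EReal) := by
    intro ε hε hεr h
    exact le_iInf₂ fun v hv => EReal.coe_le_coe_iff.2 (key ε hε hεr h v hv)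
  constructor
  · -- Γ-liminf
    apply le_antisymm
    · refine iSup₂_le fun V hV => ?_
      exact liminf_le_liminf (Filter.Eventually.of_forall fun h => easy_inf V hV.1 hV.2 h)
    · rw [← EReal.ge_of_forall_gt_iff_ge]
      intro z hz
      obtain ⟨w, hzw, hwl⟩ := EReal.exists_between_coe_real hz
      set ε : ℝ := min (r / 2) ((w - z) / ((K : ℝ) + 1)) with hεdef
      have hwz : 0 < w - z := by exact_mod_cast sub_pos.2 (EReal.coe_lt_coe_iff.1 hzw)
      have hε : 0 < ε := lt_min (by linarith) (div_pos hwz (by positivity))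
      have hεr : ε ≤ r / 2 := min_le_left _ _
      have hKε : (K : ℝ) * ε ≤ w - z := by
        have h1 : ε ≤ (w - z) / ((K : ℝ) + 1) := min_le_right _ _
        have hK0 : (0 : ℝ) ≤ (K : ℝ) := K.coe_nonneg
        have := mul_le_mul_of_nonneg_left h1 hK0
        calc (K : ℝ) * ε ≤ (K : ℝ) * ((w - z) / ((K : ℝ) + 1)) := this
          _ ≤ w - z := by
            rw [mul_div_assoc']
            exact div_le_of_le_mul₀ (by positivity) (by linarith) (by nlinarith)
      -- z ≤ w - Kε ≤ liminf F u + (-(Kε)) ≤ liminf of inf ≤ GammaLiminf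
      have step1 : (z : EReal) ≤ (w : EReal) + ((-((K : ℝ) * ε) : ℝ) : EReal) := by
        rw [← EReal.coe_add]
        exact EReal.coe_le_coe_iff.2 (by linarith)
      have step2 : (w : EReal) + ((-((K : ℝ) * ε) : ℝ) : EReal)
          ≤ liminf (fun h => (F h u : EReal)) atTop + ((-((K : ℝ) * ε) : ℝ) : EReal) :=
        add_le_add_left hwl.le _
      have step3 : liminf (fun h => (F h u : EReal)) atTop + ((-((K : ℝ) * ε) : ℝ) : EReal)
          ≤ liminf (fun h => ((F h u - (K : ℝ) * ε : ℝ) : EReal)) atTop := by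
        have := EReal.le_liminf_add (f := atTop) (u := fun h => (F h u : EReal))
          (v := fun _ => ((-((K : ℝ) * ε) : ℝ) : EReal))
        rw [liminf_const] at this
        refine le_trans this (le_of_eq ?_)
        congr 1
      have step4 : liminf (fun h => ((F h u - (K : ℝ) * ε : ℝ) : EReal)) atTop
          ≤ liminf (fun h => ⨅ v ∈ Metric.ball u ε, (F h v : EReal)) atTop :=
        liminf_le_liminf (Filter.Eventually.of_forall fun h => ball_inf ε hε hεr h)
      have step5 : liminf (fun h => ⨅ v ∈ Metric.ball u ε, (F h v : EReal)) atTop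
          ≤ GammaLiminf F u :=
        le_biSup (fun V => liminf (fun h => ⨅ v ∈ V, (F h v : EReal)) atTop)
          (Set.mem_setOf.2 ⟨Metric.isOpen_ball, Metric.mem_ball_self hε⟩)
      exact step1.trans (step2.trans (step3.trans (step4.trans step5)))
  · -- Γ-limsup
    apply le_antisymm
    · refine iSup₂_le fun V hV => ?_
      exact limsup_le_limsup (Filter.Eventually.of_forall fun h => easy_inf V hV.1 hV.2 h)
    · rw [← EReal.ge_of_forall_gt_iff_ge]
      intro z hz
      obtain ⟨w, hzw, hwl⟩ := EReal.exists_between_coe_real hz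
      set ε : ℝ := min (r / 2) ((w - z) / ((K : ℝ) + 1)) with hεdef
      have hwz : 0 < w - z := by exact_mod_cast sub_pos.2 (EReal.coe_lt_coe_iff.1 hzw)
      have hε : 0 < ε := lt_min (by linarith) (div_pos hwz (by positivity))
      have hεr : ε ≤ r / 2 := min_le_left _ _
      have hKε : (K : ℝ) * ε ≤ w - z := by
        have h1 : ε ≤ (w - z) / ((K : ℝ) + 1) := min_le_right _ _
        have hK0 : (0 : ℝ) ≤ (K : ℝ) := K.coe_nonneg
        have := mul_le_mul_of_nonneg_left h1 hK0
        calc (K : ℝ) * ε ≤ (K : ℝ) * ((w - z) / ((K : ℝ) + 1)) := this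
          _ ≤ w - z := by
            rw [mul_div_assoc']
            exact div_le_of_le_mul₀ (by positivity) (by linarith) (by nlinarith)
      have step1 : (z : EReal) ≤ (w : EReal) + ((-((K : ℝ) * ε) : ℝ) : EReal) := by
        rw [← EReal.coe_add]
        exact EReal.coe_le_coe_iff.2 (by linarith)
      have step2 : (w : EReal) + ((-((K : ℝ) * ε) : ℝ) : EReal)
          ≤ limsup (fun h => (F h u : EReal)) atTop + ((-((K : ℝ) * ε) : ℝ) : EReal) :=
        add_le_add_left hwl.le _
      have step3 : limsup (fun h => (F h u : EReal)) atTop + ((-((K : ℝ) * ε) : ℝ) : EReal)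
          ≤ limsup (fun h => ((F h u - (K : ℝ) * ε : ℝ) : EReal)) atTop := by
        have := EReal.le_limsup_add (f := atTop) (u := fun h => (F h u : EReal))
          (v := fun _ => ((-((K : ℝ) * ε) : ℝ) : EReal))
        rw [liminf_const] at this
        refine le_trans this (le_of_eq ?_)
        congr 1
      have step4 : limsup (fun h => ((F h u - (K : ℝ) * ε : ℝ) : EReal)) atTop
          ≤ limsup (fun h => ⨅ v ∈ Metric.ball u ε, (F h v : EReal)) atTop :=
        limsup_le_limsup (Filter.Eventually.of_forall fun h => ball_inf ε hε hεr h)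
      have step5 : limsup (fun h => ⨅ v ∈ Metric.ball u ε, (F h v : EReal)) atTop
          ≤ GammaLimsup F u :=
        le_biSup (fun V => limsup (fun h => ⨅ v ∈ V, (F h v : EReal)) atTop)
          (Set.mem_setOf.2 ⟨Metric.isOpen_ball, Metric.mem_ball_self hε⟩)
      exact step1.trans (step2.trans (step3.trans (step4.trans step5)))

end
end
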